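/- Let α ∈ ℝ be irrational. Then there exists a constant C > 0 such that for every odd integer v, inf_{t ∈ [v−1, v+1]} |2 + e^{iπt} + e^{iπαt}| ≤ C · (min_{u odd} |vα − u|)². -/

import Mathlib

open Real Complex

lemma exp_pi_int_odd (n : ℤ) (hn : Odd n) :
    Complex.exp (Real.pi * (n : ℝ) * Complex.I) = -1 := by
  have : (Real.pi : ℂ) * (n : ℝ) * Complex.I = (n : ℤ) * (Real.pi * Complex.I) := by
    push_cast; ring
  rw [this, Complex.exp_int_mul, Complex.exp_pi_mul_I]
  exact hn.neg_one_zpow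

lemma one_sub_cos_le (x : ℝ) : 1 - Real.cos x ≤ x ^ 2 / 2 := by
  have h1 : Real.sin (x / 2) ^ 2 = 1 / 2 - Real.cos x / 2 := by
    have := Real.sin_sq_eq_half_sub (x / 2)
    rwa [mul_div_cancel₀ x two_ne_zero] at this
  have h2 : Real.sin (x / 2) ^ 2 ≤ (x / 2) ^ 2 := Real.sin_sq_le_sq
  nlinarith

theorem inf_h_le_oddApprox_sq (α : ℝ) (hα : Irrational α) :
    ∃ C : ℝ, 0 < C ∧ ∀ v : ℤ, Odd v →
      (⨅ t : Set.Icc ((v : ℝ) - 1) ((v : ℝ) + 1),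
          ‖2 + Complex.exp (Real.pi * (t : ℝ) * Complex.I)
            + Complex.exp (Real.pi * α * (t : ℝ) * Complex.I)‖)
        ≤ C * (sInf {x : ℝ | ∃ u : ℤ, Odd u ∧ x = |(v : ℝ) * α - (u : ℝ)|}) ^ 2 := by
  have hαne : α ≠ (-1 : ℝ) := by
    simpa using hα.ne_int (-1)
  have hm0 : (0:ℝ) < |1 + α| := by
    rw [abs_pos]
    intro h
    exact hαne (by linarith)
  set m : ℝ := |1 + α| with hm
  refine ⟨(Real.pi ^ 2 + 2) / m ^ 2, by positivity, ?_⟩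
  intro v hv
  set β : ℝ := (v : ℝ) * α with hβ
  set k : ℤ := round ((β - 1) / 2) with hk
  set u : ℤ := 2 * k + 1 with hu
  have hu_odd : Odd u := ⟨k, hu⟩
  set δ : ℝ := β - (u : ℝ) with hδ
  -- minimality of u
  have hmin : ∀ u' : ℤ, Odd u' → |δ| ≤ |β - (u' : ℝ)| := by
    intro u' hu'
    obtain ⟨k', hk'⟩ := hu'
    have h1 : |δ| = 2 * |(β - 1) / 2 - (k : ℝ)| := by
      have hd : δ = 2 * ((β - 1) / 2 - (k : ℝ)) := by rw [hδ, hu]; push_cast; ring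
      rw [hd, abs_mul, _root_.abs_two]
    have h2 : |β - (u' : ℝ)| = 2 * |(β - 1) / 2 - (k' : ℝ)| := by
      have hd : β - (u' : ℝ) = 2 * ((β - 1) / 2 - (k' : ℝ)) := by rw [hk']; push_cast; ring
      rw [hd, abs_mul, _root_.abs_two]
    rw [h1, h2]
    have := round_le ((β - 1) / 2) k'
    linarith
  -- the sInf equals |δ|
  have hSset : sInf {x : ℝ | ∃ u : ℤ, Odd u ∧ x = |(v : ℝ) * α - (u : ℝ)|} = |δ| := by
    apply le_antisymm
    · exact csInf_le ⟨0, fun x ⟨w, _, hw⟩ => hw ▸ abs_nonneg _⟩ ⟨u, hu_odd, rfl⟩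
    · exact le_csInf ⟨|δ|, u, hu_odd, rfl⟩ (fun x ⟨w, hw, hxw⟩ => hxw ▸ hmin w hw)
  rw [hSset]
  -- |δ| ≤ 1
  have hδ1 : |δ| ≤ 1 := by
    have h1 : |δ| = 2 * |(β - 1) / 2 - (k : ℝ)| := by
      have hd : δ = 2 * ((β - 1) / 2 - (k : ℝ)) := by rw [hδ, hu]; push_cast; ring
      rw [hd, abs_mul, _root_.abs_two]
    have := abs_sub_round ((β - 1) / 2)
    rw [h1]; linarith
  -- bddBelow of the range
  have hbdd : BddBelow (Set.range fun t : Set.Icc ((v : ℝ) - 1) ((v : ℝ) + 1) =>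
      ‖2 + Complex.exp (Real.pi * (t : ℝ) * Complex.I)
        + Complex.exp (Real.pi * α * (t : ℝ) * Complex.I)‖) :=
    ⟨0, fun x ⟨t, ht⟩ => ht ▸ norm_nonneg _⟩
  have key : ∀ t₀ : ℝ, t₀ ∈ Set.Icc ((v : ℝ) - 1) ((v : ℝ) + 1) →
      (⨅ t : Set.Icc ((v : ℝ) - 1) ((v : ℝ) + 1),
          ‖2 + Complex.exp (Real.pi * (t : ℝ) * Complex.I)
            + Complex.exp (Real.pi * α * (t : ℝ) * Complex.I)‖)
        ≤ ‖2 + Complex.exp (Real.pi * t₀ * Complex.I)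
            + Complex.exp (Real.pi * α * t₀ * Complex.I)‖ := by
    intro t₀ ht₀
    exact ciInf_le hbdd (⟨t₀, ht₀⟩ : Set.Icc ((v : ℝ) - 1) ((v : ℝ) + 1))
  by_cases hcase : |δ| ≤ m
  · -- choose t₀ = v + s, s = -δ/(1+α)
    set s : ℝ := -δ / (1 + α) with hs
    have h1α : (1 : ℝ) + α ≠ 0 := fun h => hαne (by linarith)
    have hsle : |s| ≤ 1 := by
      rw [hs, abs_div, abs_neg]
      rw [div_le_one hm0]
      exact hcase
    have hmem : (v : ℝ) + s ∈ Set.Icc ((v : ℝ) - 1) ((v : ℝ) + 1) := by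
      constructor <;> [linarith [neg_abs_le s]; linarith [le_abs_self s]]
    refine (key _ hmem).trans ?_
    push_cast
    -- compute the value
    have e1 : Complex.exp (Real.pi * ((v : ℝ) + s) * Complex.I)
        = - Complex.exp (Real.pi * s * Complex.I) := by
      have : (Real.pi : ℂ) * ((v : ℝ) + s) * Complex.I
          = Real.pi * (v : ℝ) * Complex.I + Real.pi * s * Complex.I := by
        push_cast; ring
      rw [this, Complex.exp_add, exp_pi_int_odd v hv]; ring
    have hδs : α * ((v:ℝ) + s) = (u : ℝ) + (-s) := by
      have : δ + α * s = -s := by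
        rw [hs]; field_simp; ring
      have h2 : α * ((v:ℝ) + s) = (u:ℝ) + (δ + α * s) := by
        rw [hδ, hβ]; ring
      rw [h2, this]
    have e2 : Complex.exp (Real.pi * α * ((v : ℝ) + s) * Complex.I)
        = - Complex.exp (-(Real.pi * s) * Complex.I) := by
      have harg : (Real.pi : ℂ) * α * ((v : ℝ) + s) * Complex.I
          = Real.pi * (u : ℝ) * Complex.I + (-(Real.pi * s)) * Complex.I := by
        have : (Real.pi : ℂ) * α * ((v : ℝ) + s) = Real.pi * ((α : ℂ) * ((v:ℝ) + s)) := by ring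
        rw [this]
        have h5 : ((α : ℂ) * (((v:ℝ) : ℂ) + (s : ℂ))) = (((u:ℝ) + -s : ℝ) : ℂ) := by
          exact_mod_cast congrArg Complex.ofReal hδs
        rw [h5]; push_cast; ring
      rw [harg, Complex.exp_add, exp_pi_int_odd u hu_odd]
      ring
    push_cast at e1 e2
    rw [e1, e2]
    have e3 : (2 : ℂ) + -Complex.exp (Real.pi * s * Complex.I)
        + -Complex.exp (-(Real.pi * s) * Complex.I)
        = ((2 - 2 * Real.cos (Real.pi * s) : ℝ) : ℂ) := by
      rw [show ((Real.pi : ℂ) * s) * Complex.I = ((Real.pi * s : ℝ) : ℂ) * Complex.I by push_cast; ring,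
        show (-((Real.pi : ℂ) * s)) * Complex.I = ((-(Real.pi * s) : ℝ) : ℂ) * Complex.I by push_cast; ring,
        Complex.exp_mul_I, Complex.exp_mul_I, Complex.ofReal_neg, Complex.cos_neg, Complex.sin_neg,
        ← Complex.ofReal_cos]
      push_cast; ring
    rw [e3, Complex.norm_real, Real.norm_eq_abs]
    have hcos : 2 - 2 * Real.cos (Real.pi * s) ≤ (Real.pi * s) ^ 2 := by
      have := one_sub_cos_le (Real.pi * s)
      linarith
    have hcosnn : 0 ≤ 2 - 2 * Real.cos (Real.pi * s) := by
      have := Real.cos_le_one (Real.pi * s)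
      linarith
    rw [_root_.abs_of_nonneg hcosnn]
    have hs2 : s ^ 2 = δ ^ 2 / m ^ 2 := by
      rw [hs, div_pow, hm, _root_.sq_abs, neg_pow]
      norm_num
    have : (Real.pi * s) ^ 2 = Real.pi ^ 2 * (δ ^ 2 / m ^ 2) := by
      rw [mul_pow, hs2]
    rw [_root_.sq_abs]
    refine hcos.trans ?_
    rw [this, hm, _root_.sq_abs, ← mul_div_assoc, div_mul_eq_mul_div]
    have hd2 : (0:ℝ) < (1 + α) ^ 2 := by positivity
    exact (div_le_div_iff_of_pos_right hd2).mpr (by nlinarith [sq_nonneg δ, _root_.sq_abs δ])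
  · -- t₀ = v
    push_neg at hcase
    have hmem : (v : ℝ) ∈ Set.Icc ((v : ℝ) - 1) ((v : ℝ) + 1) := by
      constructor <;> linarith
    refine (key _ hmem).trans ?_
    have e1 : Complex.exp (Real.pi * (v : ℝ) * Complex.I) = -1 := exp_pi_int_odd v hv
    rw [e1]
    have hb : ‖2 + (-1) + Complex.exp (Real.pi * α * (v : ℝ) * Complex.I)‖ ≤ 2 := by
      have : (2 : ℂ) + (-1) + Complex.exp (Real.pi * α * (v : ℝ) * Complex.I)
          = 1 + Complex.exp (Real.pi * α * (v : ℝ) * Complex.I) := by ring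
      rw [this]
      refine (norm_add_le _ _).trans ?_
      have harg : (Real.pi : ℂ) * α * (v : ℝ) * Complex.I = ((Real.pi * α * v : ℝ) : ℂ) * Complex.I := by
        push_cast; ring
      rw [harg, Complex.norm_exp_ofReal_mul_I]
      norm_num
    refine hb.trans ?_
    have hm2 : m ^ 2 < δ ^ 2 := by
      have := sq_lt_sq' (by linarith [neg_abs_le δ, abs_nonneg δ]) hcase
      nlinarith [abs_nonneg δ, _root_.sq_abs δ]
    rw [div_mul_eq_mul_div, le_div_iff₀ (by positivity)]
    nlinarith [Real.pi_pos, sq_nonneg δ]
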